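/- For any coupling M of p and q, the Shannon entropy of M satisfies H(M) ≥ H(p ∧ q), where p ∧ q is the greatest lower bound of p and q in the majorization lattice. -/

import Mathlib

open Finset

/-- Majorization via prefix sums (vectors as functions ℕ → ℝ, padded with zeros). -/
def Maj (p q : ℕ → ℝ) : Prop :=
  ∀ i : ℕ, ∑ k ∈ Finset.range i, p k ≤ ∑ k ∈ Finset.range i, q k

/-- A probability vector of length `n`, sorted non-increasingly, zero beyond `n`. -/
def IsProbVec (n : ℕ) (p : ℕ → ℝ) : Prop :=
  (∀ i, 0 ≤ p i) ∧ (∀ i j : ℕ, i ≤ j → p j ≤ p i) ∧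
  (∑ k ∈ Finset.range n, p k = 1) ∧ (∀ i, n ≤ i → p i = 0)

/-- The greatest lower bound `p ∧ q` in the majorization lattice. -/
noncomputable def meet (p q : ℕ → ℝ) : ℕ → ℝ := fun i =>
  min (∑ k ∈ Finset.range (i + 1), p k) (∑ k ∈ Finset.range (i + 1), q k) -
  min (∑ k ∈ Finset.range i, p k) (∑ k ∈ Finset.range i, q k)

/-- Shannon entropy (base 2) of the first `n` components. -/
noncomputable def H2 (n : ℕ) (p : ℕ → ℝ) : ℝ :=
  ∑ k ∈ Finset.range n, -(p k * Real.logb 2 (p k))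

/-- Shannon entropy (base 2) of the entries of an `n × m` matrix. -/
noncomputable def Hmat (n m : ℕ) (M : ℕ → ℕ → ℝ) : ℝ :=
  ∑ i ∈ Finset.range n, ∑ j ∈ Finset.range m, -(M i j * Real.logb 2 (M i j))

/-- `M` is a coupling of `p` and `q`: nonnegative, row sums `p`, column sums `q`. -/
def IsCoupling (n m : ℕ) (p q : ℕ → ℝ) (M : ℕ → ℕ → ℝ) : Prop :=
  (∀ i j, 0 ≤ M i j) ∧ (∀ i < n, ∑ j ∈ Finset.range m, M i j = p i) ∧
  (∀ j < m, ∑ i ∈ Finset.range n, M i j = q j)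

/-- The `half` operator: duplicates and halves each component. -/
noncomputable def half (p : ℕ → ℝ) : ℕ → ℝ := fun i => p (i / 2) / 2

/-- Iterated `half` operator. -/
noncomputable def halfIter : ℕ → (ℕ → ℝ) → (ℕ → ℝ)
  | 0, p => p
  | (i + 1), p => half (halfIter i p)

/-- Iterated majorization meet of `p 0, p 1, …, p k`. -/
noncomputable def bigMeet (p : ℕ → ℕ → ℝ) : ℕ → (ℕ → ℝ)
  | 0 => p 0
  | (k + 1) => meet (bigMeet p k) (p (k + 1))

/-- Tangent line inequality for negMulLog at a positive point. -/
lemma tangent_ineq {y z : ℝ} (hy : 0 < y) (hz : 0 ≤ z) :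
    Real.negMulLog z ≤ Real.negMulLog y + (-Real.log y - 1) * (z - y) := by
  rcases eq_or_lt_of_le hz with h | h
  · subst h
    simp [Real.negMulLog]
    nlinarith [Real.log_le_sub_one_of_pos hy, hy]
  · have h1 : Real.log (y / z) ≤ y / z - 1 := Real.log_le_sub_one_of_pos (div_pos hy h)
    have h2 : z * Real.log (y / z) ≤ y - z := by
      have := mul_le_mul_of_nonneg_left h1 h.le
      calc z * Real.log (y / z) ≤ z * (y / z - 1) := this
        _ = y - z := by field_simp
    rw [Real.log_div hy.ne' h.ne'] at h2
    simp only [Real.negMulLog]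
    nlinarith [h2]

/-- Abel summation core inequality. -/
lemma abel_nonpos (N : ℕ) (d a : ℕ → ℝ)
    (hd : ∀ j k, j ≤ k → k < N → d j ≤ d k)
    (hA : ∀ k, k ≤ N → 0 ≤ ∑ j ∈ Finset.range k, a j)
    (hAN : ∑ j ∈ Finset.range N, a j = 0) :
    ∑ k ∈ Finset.range N, d k * a k ≤ 0 := by
  have h := Finset.sum_range_by_parts d a N
  simp only [smul_eq_mul] at h
  rw [h, hAN, mul_zero, zero_sub, neg_nonpos]
  apply Finset.sum_nonneg
  intro i hi
  rw [Finset.mem_range] at hi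
  have h1 : d i ≤ d (i + 1) := hd i (i + 1) (Nat.le_succ i) (by omega)
  have h2 : 0 ≤ ∑ j ∈ Finset.range (i + 1), a j := hA (i + 1) (by omega)
  exact mul_nonneg (by linarith) h2


/-- Schur-concavity core: if `y` is nonincreasing, nonnegative, with prefix sums
dominated by those of nonnegative `z`, and equal total, then entropy of `y` exceeds that of `z`. -/
lemma schur_core (N : ℕ) (y z : ℕ → ℝ)
    (hy0 : ∀ k, 0 ≤ y k) (hz0 : ∀ k, 0 ≤ z k)
    (hymono : ∀ j k, j ≤ k → y k ≤ y j)
    (hYZ : ∀ k, k ≤ N → ∑ j ∈ Finset.range k, y j ≤ ∑ j ∈ Finset.range k, z j)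
    (heq : ∑ j ∈ Finset.range N, y j = ∑ j ∈ Finset.range N, z j) :
    ∑ k ∈ Finset.range N, Real.negMulLog (z k) ≤ ∑ k ∈ Finset.range N, Real.negMulLog (y k) := by
  classical
  -- key: zeros of y force zeros of z
  have key : ∀ k, k < N → y k = 0 → z k = 0 := by
    intro k hk hyk
    have htaily : ∀ j ∈ Finset.Ico k N, y j = 0 := by
      intro j hj
      rw [Finset.mem_Ico] at hj
      exact le_antisymm (hyk ▸ hymono k j hj.1) (hy0 j)
    have hYk : ∑ j ∈ Finset.range k, y j = ∑ j ∈ Finset.range N, y j := by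
      rw [← Finset.sum_range_add_sum_Ico y (le_of_lt hk), Finset.sum_eq_zero htaily, add_zero]
    have hZk : ∑ j ∈ Finset.range N, z j ≤ ∑ j ∈ Finset.range k, z j := by
      calc ∑ j ∈ Finset.range N, z j = ∑ j ∈ Finset.range N, y j := heq.symm
        _ = ∑ j ∈ Finset.range k, y j := hYk.symm
        _ ≤ ∑ j ∈ Finset.range k, z j := hYZ k (le_of_lt hk)
    have hsplit : ∑ j ∈ Finset.range k, z j + ∑ j ∈ Finset.Ico k N, z j
        = ∑ j ∈ Finset.range N, z j := Finset.sum_range_add_sum_Ico z (le_of_lt hk)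
    have htail_nonneg : 0 ≤ ∑ j ∈ Finset.Ico k N, z j :=
      Finset.sum_nonneg fun j _ => hz0 j
    have htail_zero : ∑ j ∈ Finset.Ico k N, z j = 0 := by linarith
    have := (Finset.sum_eq_zero_iff_of_nonneg fun j _ => hz0 j).mp htail_zero
    exact this k (Finset.mem_Ico.mpr ⟨le_refl k, hk⟩)
  set S := (Finset.range N).filter (fun k => y k ≠ 0) with hS
  by_cases hSe : S = ∅
  · -- all y zero on range N, hence all z zero
    have hyz : ∀ k ∈ Finset.range N, y k = 0 := by
      intro k hk
      by_contra h
      have : k ∈ S := by rw [hS]; exact Finset.mem_filter.mpr ⟨hk, h⟩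
      rw [hSe] at this
      exact absurd this (Finset.notMem_empty k)
    have hzz : ∀ k ∈ Finset.range N, z k = 0 := fun k hk =>
      key k (Finset.mem_range.mp hk) (hyz k hk)
    rw [Finset.sum_eq_zero fun k hk => by rw [hzz k hk]; simp,
      Finset.sum_eq_zero fun k hk => by rw [hyz k hk]; simp]
  · have hSne : S.Nonempty := Finset.nonempty_iff_ne_empty.mpr hSe
    set t := S.max' hSne with ht
    have htS : t ∈ S := S.max'_mem hSne
    have htN : t < N := Finset.mem_range.mp (Finset.mem_filter.mp htS).1
    have hyt : y t ≠ 0 := (Finset.mem_filter.mp htS).2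
    have hpos : ∀ k, k ≤ t → 0 < y k := by
      intro k hk
      have h1 : y t ≤ y k := hymono k t hk
      have h2 : 0 < y t := lt_of_le_of_ne (hy0 t) (Ne.symm hyt)
      linarith
    set d : ℕ → ℝ := fun k => -Real.log (y (min k t)) - 1 with hd
    have hdm : ∀ j k, j ≤ k → k < N → d j ≤ d k := by
      intro j k hjk _
      have h1 : min j t ≤ min k t := min_le_min hjk (le_refl t)
      have h2 : y (min k t) ≤ y (min j t) := hymono _ _ h1
      have h3 : 0 < y (min k t) := hpos _ (min_le_right k t)
      have := Real.log_le_log h3 h2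
      simp only [hd]
      linarith
    have htang : ∀ k ∈ Finset.range N,
        Real.negMulLog (z k) ≤ Real.negMulLog (y k) + d k * (z k - y k) := by
      intro k hk
      rw [Finset.mem_range] at hk
      by_cases hyk : y k = 0
      · rw [key k hk hyk, hyk]; simp
      · have hkt : k ≤ t := S.le_max' k (Finset.mem_filter.mpr ⟨Finset.mem_range.mpr hk, hyk⟩)
        have : min k t = k := min_eq_left hkt
        simp only [hd, this]
        exact tangent_ineq (lt_of_le_of_ne (hy0 k) (Ne.symm hyk)) (hz0 k)
    calc ∑ k ∈ Finset.range N, Real.negMulLog (z k)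
        ≤ ∑ k ∈ Finset.range N, (Real.negMulLog (y k) + d k * (z k - y k)) :=
          Finset.sum_le_sum htang
      _ = ∑ k ∈ Finset.range N, Real.negMulLog (y k)
          + ∑ k ∈ Finset.range N, d k * (z k - y k) := Finset.sum_add_distrib
      _ ≤ ∑ k ∈ Finset.range N, Real.negMulLog (y k) := by
          have := abel_nonpos N d (fun k => z k - y k) hdm
            (fun k hk => by
              rw [Finset.sum_sub_distrib]
              linarith [hYZ k hk])
            (by rw [Finset.sum_sub_distrib]; linarith [heq])
          linarith


/-- Sum over any finite set of indices is at most the prefix sum of the same cardinality,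
for a nonincreasing nonnegative function. -/
lemma sum_le_prefix (p : ℕ → ℝ) (hp0 : ∀ i, 0 ≤ p i)
    (hmono : ∀ i j : ℕ, i ≤ j → p j ≤ p i) :
    ∀ (I : Finset ℕ), ∑ i ∈ I, p i ≤ ∑ i ∈ Finset.range I.card, p i := by
  suffices h : ∀ (c : ℕ) (I : Finset ℕ), I.card = c →
      ∑ i ∈ I, p i ≤ ∑ i ∈ Finset.range I.card, p i by
    intro I; exact h I.card I rfl
  intro c
  induction c with
  | zero => intro I hc; rw [Finset.card_eq_zero.mp hc]; simp
  | succ c ih =>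
    intro I hc
    have hne : I.Nonempty := Finset.card_pos.mp (by omega)
    set Mx := I.max' hne with hMx
    have hMxI : Mx ∈ I := I.max'_mem hne
    have hcard : (I.erase Mx).card = c := by
      rw [Finset.card_erase_of_mem hMxI, hc]; omega
    have hsub : I ⊆ Finset.range (Mx + 1) := by
      intro i hi
      exact Finset.mem_range.mpr (Nat.lt_succ_of_le (I.le_max' i hi))
    have hcM : c ≤ Mx := by
      have := Finset.card_le_card hsub
      rw [hc, Finset.card_range] at this
      omega
    have h1 : ∑ i ∈ I.erase Mx, p i ≤ ∑ i ∈ Finset.range c, p i := by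
      have := ih (I.erase Mx) hcard
      rwa [hcard] at this
    have h2 : p Mx ≤ p c := hmono c Mx hcM
    have hfinal : ∑ i ∈ I, p i ≤ ∑ i ∈ Finset.range (c + 1), p i := by
      calc ∑ i ∈ I, p i = ∑ i ∈ I.erase Mx, p i + p Mx := by
            rw [Finset.sum_erase_add _ _ hMxI]
        _ ≤ ∑ i ∈ Finset.range c, p i + p c := add_le_add h1 h2
        _ = ∑ i ∈ Finset.range (c + 1), p i := (Finset.sum_range_succ p c).symm
    rw [hc]
    exact hfinal

lemma sum_le_prefix' (p : ℕ → ℝ) (hp0 : ∀ i, 0 ≤ p i)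
    (hmono : ∀ i j : ℕ, i ≤ j → p j ≤ p i) (I : Finset ℕ) (k : ℕ) (hk : I.card ≤ k) :
    ∑ i ∈ I, p i ≤ ∑ i ∈ Finset.range k, p i := by
  calc ∑ i ∈ I, p i ≤ ∑ i ∈ Finset.range I.card, p i := sum_le_prefix p hp0 hmono I
    _ ≤ ∑ i ∈ Finset.range k, p i :=
      Finset.sum_le_sum_of_subset_of_nonneg
        (Finset.range_subset_range.mpr hk) (fun i _ _ => hp0 i)

/-- Row bound: any set of entries of the coupling sums to at most the prefix sum of `p`. -/
lemma row_bound (n m : ℕ) (hm : 0 < m) (p : ℕ → ℝ) (M : ℕ → ℕ → ℝ)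
    (hM0 : ∀ i j, 0 ≤ M i j) (hrow : ∀ i < n, ∑ j ∈ Finset.range m, M i j = p i)
    (hp0 : ∀ i, 0 ≤ p i) (hmono : ∀ i j : ℕ, i ≤ j → p j ≤ p i)
    (s : Finset ℕ) (hs : s ⊆ Finset.range (n * m)) :
    ∑ k ∈ s, M (k / m) (k % m) ≤ ∑ i ∈ Finset.range s.card, p i := by
  classical
  set I := s.image (· / m) with hI
  have hmaps : ∀ k ∈ s, k / m ∈ I := fun k hk => Finset.mem_image_of_mem _ hk
  have hfib := Finset.sum_fiberwise_of_maps_to hmaps (fun k => M (k / m) (k % m))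
  rw [← hfib]
  have hstep : ∀ i ∈ I, ∑ k ∈ s.filter (· / m = i), M (k / m) (k % m) ≤ p i := by
    intro i hi
    obtain ⟨k0, hk0s, hk0⟩ := Finset.mem_image.mp hi
    have hin : i < n := by
      have := Finset.mem_range.mp (hs hk0s)
      subst hk0
      exact Nat.div_lt_iff_lt_mul hm |>.mpr (by omega)
    have hcongr : ∑ k ∈ s.filter (· / m = i), M (k / m) (k % m)
        = ∑ k ∈ s.filter (· / m = i), M i (k % m) := by
      apply Finset.sum_congr rfl
      intro k hk
      rw [(Finset.mem_filter.mp hk).2]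
    rw [hcongr]
    have hinj : ∀ x ∈ s.filter (· / m = i), ∀ y ∈ s.filter (· / m = i),
        x % m = y % m → x = y := by
      intro x hx y hy hxy
      have hx' := (Finset.mem_filter.mp hx).2
      have hy' := (Finset.mem_filter.mp hy).2
      calc x = m * (x / m) + x % m := (Nat.div_add_mod x m).symm
        _ = m * (y / m) + y % m := by rw [hx', hy', hxy]
        _ = y := Nat.div_add_mod y m
    have him : ∑ j ∈ (s.filter (· / m = i)).image (· % m), M i j
        = ∑ k ∈ s.filter (· / m = i), M i (k % m) := Finset.sum_image hinj
    rw [← him]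
    calc ∑ j ∈ (s.filter (· / m = i)).image (· % m), M i j
        ≤ ∑ j ∈ Finset.range m, M i j := by
          apply Finset.sum_le_sum_of_subset_of_nonneg
          · intro j hj
            obtain ⟨k, _, hk⟩ := Finset.mem_image.mp hj
            exact Finset.mem_range.mpr (hk ▸ Nat.mod_lt k hm)
          · exact fun j _ _ => hM0 i j
      _ = p i := hrow i hin
  calc ∑ i ∈ I, ∑ k ∈ s.filter (· / m = i), M (k / m) (k % m)
      ≤ ∑ i ∈ I, p i := Finset.sum_le_sum hstep
    _ ≤ ∑ i ∈ Finset.range s.card, p i :=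
        sum_le_prefix' p hp0 hmono I s.card (le_trans (Finset.card_image_le) (le_refl _))

/-- Column bound. -/
lemma col_bound (n m : ℕ) (hn : 0 < n) (hm : 0 < m) (q : ℕ → ℝ) (M : ℕ → ℕ → ℝ)
    (hM0 : ∀ i j, 0 ≤ M i j) (hcol : ∀ j < m, ∑ i ∈ Finset.range n, M i j = q j)
    (hq0 : ∀ i, 0 ≤ q i) (hmono : ∀ i j : ℕ, i ≤ j → q j ≤ q i)
    (s : Finset ℕ) (hs : s ⊆ Finset.range (n * m)) :
    ∑ k ∈ s, M (k / m) (k % m) ≤ ∑ j ∈ Finset.range s.card, q j := by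
  classical
  set J := s.image (· % m) with hJ
  have hmaps : ∀ k ∈ s, k % m ∈ J := fun k hk => Finset.mem_image_of_mem _ hk
  have hfib := Finset.sum_fiberwise_of_maps_to hmaps (fun k => M (k / m) (k % m))
  rw [← hfib]
  have hstep : ∀ j ∈ J, ∑ k ∈ s.filter (· % m = j), M (k / m) (k % m) ≤ q j := by
    intro j hj
    obtain ⟨k0, hk0s, hk0⟩ := Finset.mem_image.mp hj
    have hjm : j < m := hk0 ▸ Nat.mod_lt k0 hm
    have hcongr : ∑ k ∈ s.filter (· % m = j), M (k / m) (k % m)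
        = ∑ k ∈ s.filter (· % m = j), M (k / m) j := by
      apply Finset.sum_congr rfl
      intro k hk
      rw [(Finset.mem_filter.mp hk).2]
    rw [hcongr]
    have hinj : ∀ x ∈ s.filter (· % m = j), ∀ y ∈ s.filter (· % m = j),
        x / m = y / m → x = y := by
      intro x hx y hy hxy
      have hx' := (Finset.mem_filter.mp hx).2
      have hy' := (Finset.mem_filter.mp hy).2
      calc x = m * (x / m) + x % m := (Nat.div_add_mod x m).symm
        _ = m * (y / m) + y % m := by rw [hx', hy', hxy]
        _ = y := Nat.div_add_mod y m
    have him : ∑ i ∈ (s.filter (· % m = j)).image (· / m), M i j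
        = ∑ k ∈ s.filter (· % m = j), M (k / m) j := Finset.sum_image hinj
    rw [← him]
    calc ∑ i ∈ (s.filter (· % m = j)).image (· / m), M i j
        ≤ ∑ i ∈ Finset.range n, M i j := by
          apply Finset.sum_le_sum_of_subset_of_nonneg
          · intro i hi
            obtain ⟨k, hks, hk⟩ := Finset.mem_image.mp hi
            have := Finset.mem_range.mp (hs (Finset.mem_of_mem_filter k hks))
            exact Finset.mem_range.mpr (hk ▸ (Nat.div_lt_iff_lt_mul hm).mpr (by omega))
          · exact fun i _ _ => hM0 i j
      _ = q j := hcol j hjm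
  calc ∑ j ∈ J, ∑ k ∈ s.filter (· % m = j), M (k / m) (k % m)
      ≤ ∑ j ∈ J, q j := Finset.sum_le_sum hstep
    _ ≤ ∑ j ∈ Finset.range s.card, q j :=
        sum_le_prefix' q hq0 hmono J s.card (le_trans (Finset.card_image_le) (le_refl _))


lemma meet_prefix (p q : ℕ → ℝ) (k : ℕ) :
    ∑ j ∈ Finset.range k, meet p q j
      = min (∑ i ∈ Finset.range k, p i) (∑ i ∈ Finset.range k, q i) := by
  have := Finset.sum_range_sub
    (fun i => min (∑ j ∈ Finset.range i, p j) (∑ j ∈ Finset.range i, q j)) k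
  simpa [meet] using this

lemma meet_nonneg (p q : ℕ → ℝ) (hp0 : ∀ i, 0 ≤ p i) (hq0 : ∀ i, 0 ≤ q i) (k : ℕ) :
    0 ≤ meet p q k := by
  have h1 : ∑ j ∈ Finset.range k, p j ≤ ∑ j ∈ Finset.range (k + 1), p j := by
    rw [Finset.sum_range_succ]; linarith [hp0 k]
  have h2 : ∑ j ∈ Finset.range k, q j ≤ ∑ j ∈ Finset.range (k + 1), q j := by
    rw [Finset.sum_range_succ]; linarith [hq0 k]
  have := min_le_min h1 h2
  simp only [meet]
  linarith [this]

lemma meet_antitone (p q : ℕ → ℝ)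
    (hpm : ∀ i j : ℕ, i ≤ j → p j ≤ p i) (hqm : ∀ i j : ℕ, i ≤ j → q j ≤ q i) :
    ∀ j k : ℕ, j ≤ k → meet p q k ≤ meet p q j := by
  have step : ∀ k : ℕ, meet p q (k + 1) ≤ meet p q k := by
    intro k
    set P : ℕ → ℝ := fun i => ∑ j ∈ Finset.range i, p j with hP
    set Q : ℕ → ℝ := fun i => ∑ j ∈ Finset.range i, q j with hQ
    have hPc : P (k + 2) + P k ≤ 2 * P (k + 1) := by
      have e2 : P (k + 2) = P (k + 1) + p (k + 1) := Finset.sum_range_succ p (k + 1)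
      have e1 : P (k + 1) = P k + p k := Finset.sum_range_succ p k
      have := hpm k (k + 1) (Nat.le_succ k)
      rw [e2, e1]; linarith
    have hQc : Q (k + 2) + Q k ≤ 2 * Q (k + 1) := by
      have e2 : Q (k + 2) = Q (k + 1) + q (k + 1) := Finset.sum_range_succ q (k + 1)
      have e1 : Q (k + 1) = Q k + q k := Finset.sum_range_succ q k
      have := hqm k (k + 1) (Nat.le_succ k)
      rw [e2, e1]; linarith
    have h1 : min (P (k + 2)) (Q (k + 2)) + min (P k) (Q k) ≤ 2 * min (P (k + 1)) (Q (k + 1)) := by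
      have hA : min (P (k + 2)) (Q (k + 2)) + min (P k) (Q k) ≤ 2 * P (k + 1) :=
        le_trans (add_le_add (min_le_left _ _) (min_le_left _ _)) hPc
      have hB : min (P (k + 2)) (Q (k + 2)) + min (P k) (Q k) ≤ 2 * Q (k + 1) :=
        le_trans (add_le_add (min_le_right _ _) (min_le_right _ _)) hQc
      rcases le_total (P (k + 1)) (Q (k + 1)) with h | h
      · rw [min_eq_left h]; linarith
      · rw [min_eq_right h]; linarith
    simp only [meet]
    show min (P (k + 2)) (Q (k + 2)) - min (P (k + 1)) (Q (k + 1))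
      ≤ min (P (k + 1)) (Q (k + 1)) - min (P k) (Q k)
    linarith
  intro j k hjk
  induction k with
  | zero => have : j = 0 := Nat.le_zero.mp hjk; rw [this]
  | succ k ih =>
    rcases Nat.lt_or_ge j (k + 1) with h | h
    · exact le_trans (step k) (ih (Nat.lt_succ_iff.mp h))
    · have : j = k + 1 := le_antisymm hjk h
      rw [this]


/-- Unflattening a sum over `range (n * m)` by div/mod. -/
lemma sum_range_mul_divmod (n m : ℕ) (hm : 0 < m) (f : ℕ → ℕ → ℝ) :
    ∑ k ∈ Finset.range (n * m), f (k / m) (k % m)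
      = ∑ i ∈ Finset.range n, ∑ j ∈ Finset.range m, f i j := by
  rw [← Finset.sum_product']
  apply Finset.sum_nbij' (i := fun k => (k / m, k % m)) (j := fun x => x.1 * m + x.2)
  · intro a ha
    rw [Finset.mem_range] at ha
    refine Finset.mem_product.mpr ⟨Finset.mem_range.mpr ?_, Finset.mem_range.mpr ?_⟩
    · exact (Nat.div_lt_iff_lt_mul hm).mpr ha
    · exact Nat.mod_lt a hm
  · intro x hx
    rw [Finset.mem_product, Finset.mem_range, Finset.mem_range] at hx
    rw [Finset.mem_range]
    calc x.1 * m + x.2 < x.1 * m + m := by omega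
      _ = (x.1 + 1) * m := by ring
      _ ≤ n * m := Nat.mul_le_mul_right m hx.1
  · intro a _
    exact Nat.div_add_mod' a m
  · intro x hx
    rw [Finset.mem_product, Finset.mem_range, Finset.mem_range] at hx
    have e : x.1 * m + x.2 = x.2 + m * x.1 := by ring
    have h1 : (x.1 * m + x.2) / m = x.1 := by
      rw [e, Nat.add_mul_div_left _ _ hm, Nat.div_eq_of_lt hx.2, Nat.zero_add]
    have h2 : (x.1 * m + x.2) % m = x.2 := by
      rw [e, Nat.add_mul_mod_self_left, Nat.mod_eq_of_lt hx.2]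
    simp [h1, h2]
  · intro a _
    rfl

theorem stmt2 (n m : ℕ) (p q : ℕ → ℝ) (hp : IsProbVec n p) (hq : IsProbVec m q)
    (M : ℕ → ℕ → ℝ) (hM : IsCoupling n m p q M) :
    H2 (n * m) (meet p q) ≤ Hmat n m M := by
  classical
  obtain ⟨hp0, hpm, hp1, hpz⟩ := hp
  obtain ⟨hq0, hqm, hq1, hqz⟩ := hq
  obtain ⟨hM0, hrow, hcol⟩ := hM
  have hn : 0 < n := by
    by_contra h
    push_neg at h
    interval_cases n
    simp at hp1
  have hm : 0 < m := by
    by_contra h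
    push_neg at h
    interval_cases m
    simp at hq1
  set N := n * m with hN
  have hnN : n ≤ N := Nat.le_mul_of_pos_right n hm
  have hmN : m ≤ N := Nat.le_mul_of_pos_left m hn
  set xN : ℕ → ℝ := fun k => M (k / m) (k % m) with hxN
  set σ : Equiv.Perm (Fin N) := Tuple.sort (fun i : Fin N => -xN i.val) with hσ
  set y : ℕ → ℝ := fun k => if h : k < N then xN ((σ ⟨k, h⟩ : Fin N) : ℕ) else 0 with hy
  set z : ℕ → ℝ := meet p q with hz
  -- prefix sums of p and q saturate at 1
  have hPsat : ∀ k, n ≤ k → ∑ i ∈ Finset.range k, p i = 1 := by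
    intro k hk
    rw [← hp1]
    exact (Finset.sum_subset (Finset.range_subset_range.mpr hk)
      (fun i _ hi => hpz i (Nat.le_of_not_lt fun hlt => hi (Finset.mem_range.mpr hlt)))).symm
  have hQsat : ∀ k, m ≤ k → ∑ i ∈ Finset.range k, q i = 1 := by
    intro k hk
    rw [← hq1]
    exact (Finset.sum_subset (Finset.range_subset_range.mpr hk)
      (fun i _ hi => hqz i (Nat.le_of_not_lt fun hlt => hi (Finset.mem_range.mpr hlt)))).symm
  -- generic change of variables for sums of g over y vs matrix entries
  have hsumy : ∀ g : ℝ → ℝ, ∑ k ∈ Finset.range N, g (y k)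
      = ∑ k ∈ Finset.range N, g (xN k) := by
    intro g
    rw [← Fin.sum_univ_eq_sum_range (fun k => g (y k)) N,
      ← Fin.sum_univ_eq_sum_range (fun k => g (xN k)) N]
    have h1 : ∀ i : Fin N, g (y i.val) = g (xN (σ i).val) := by
      intro i
      simp only [hy]
      rw [dif_pos i.isLt]
    rw [Finset.sum_congr rfl fun i _ => h1 i]
    exact Equiv.sum_comp σ (fun i => g (xN i.val))
  have hsum_mat : ∀ g : ℝ → ℝ, ∑ k ∈ Finset.range N, g (xN k)
      = ∑ i ∈ Finset.range n, ∑ j ∈ Finset.range m, g (M i j) :=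
    fun g => sum_range_mul_divmod n m hm (fun i j => g (M i j))
  -- y properties
  have hy0 : ∀ k, 0 ≤ y k := by
    intro k
    simp only [hy]
    split
    · exact hM0 _ _
    · exact le_refl 0
  have hymono : ∀ j k : ℕ, j ≤ k → y k ≤ y j := by
    intro j k hjk
    simp only [hy]
    split
    · rename_i hkN
      have hjN : j < N := lt_of_le_of_lt hjk hkN
      rw [dif_pos hjN]
      have := Tuple.monotone_sort (fun i : Fin N => -xN i.val)
        (a := (⟨j, hjN⟩ : Fin N)) (b := (⟨k, hkN⟩ : Fin N)) (by exact hjk)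
      simp only [Function.comp] at this
      linarith
    · split
      · exact hM0 _ _
      · exact le_refl 0
  -- prefix sums bound
  have hYZ : ∀ k, k ≤ N → ∑ j ∈ Finset.range k, y j ≤ ∑ j ∈ Finset.range k, z j := by
    intro k hk
    set e : Fin k → ℕ := fun j => ((σ (Fin.castLE hk j) : Fin N) : ℕ) with he
    have hei : Function.Injective e := by
      intro a b hab
      have := σ.injective (Fin.val_injective hab)
      exact Fin.castLE_injective hk this
    set s : Finset ℕ := Finset.image e Finset.univ with hs
    have hscard : s.card = k := by
      rw [hs, Finset.card_image_of_injective _ hei, Finset.card_univ, Fintype.card_fin]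
    have hssub : s ⊆ Finset.range N := by
      intro a ha
      obtain ⟨j, _, hj⟩ := Finset.mem_image.mp ha
      rw [← hj]
      exact Finset.mem_range.mpr (σ (Fin.castLE hk j)).isLt
    have hYs : ∑ j ∈ Finset.range k, y j = ∑ a ∈ s, xN a := by
      rw [Finset.sum_image (fun a _ b _ hab => hei hab),
        ← Fin.sum_univ_eq_sum_range (fun j => y j) k]
      apply Finset.sum_congr rfl
      intro j _
      simp only [hy, he]
      rw [dif_pos (lt_of_lt_of_le j.isLt hk)]
      rfl
    have hrb := row_bound n m hm p M hM0 hrow hp0 hpm s hssub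
    have hcb := col_bound n m hn hm q M hM0 hcol hq0 hqm s hssub
    rw [hscard] at hrb hcb
    rw [hYs, hz, meet_prefix]
    exact le_min hrb hcb
  -- equal totals
  have hmatsum : ∑ k ∈ Finset.range N, xN k = 1 := by
    have hid := hsum_mat id
    simp only [id] at hid
    rw [hid]
    calc ∑ i ∈ Finset.range n, ∑ j ∈ Finset.range m, M i j
        = ∑ i ∈ Finset.range n, p i := by
          apply Finset.sum_congr rfl
          intro i hi
          exact hrow i (Finset.mem_range.mp hi)

      _ = 1 := hp1
  have heq : ∑ j ∈ Finset.range N, y j = ∑ j ∈ Finset.range N, z j := by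
    have h1 : ∑ j ∈ Finset.range N, y j = 1 := by
      have hid := hsumy id
      simp only [id] at hid
      rw [hid]
      exact hmatsum
    have h2 : ∑ j ∈ Finset.range N, z j = 1 := by
      rw [hz, meet_prefix, hPsat N hnN, hQsat N hmN]
      simp
    rw [h1, h2]
  -- Schur
  have hschur := schur_core N y z hy0 (meet_nonneg p q hp0 hq0) hymono hYZ heq
  have hylog : ∑ k ∈ Finset.range N, Real.negMulLog (y k)
      = ∑ i ∈ Finset.range n, ∑ j ∈ Finset.range m, Real.negMulLog (M i j) := by
    rw [hsumy Real.negMulLog, hsum_mat Real.negMulLog]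
  -- convert to logb
  have hconv : ∀ a : ℝ, -(a * Real.logb 2 a) = Real.negMulLog a / Real.log 2 := by
    intro a
    simp only [Real.logb, Real.negMulLog]
    ring
  have hlog2 : (0:ℝ) < Real.log 2 := Real.log_pos one_lt_two
  have hH2 : H2 N z = (∑ k ∈ Finset.range N, Real.negMulLog (z k)) / Real.log 2 := by
    rw [H2, Finset.sum_div]
    exact Finset.sum_congr rfl fun k _ => hconv (z k)
  have hHmat : Hmat n m M
      = (∑ i ∈ Finset.range n, ∑ j ∈ Finset.range m, Real.negMulLog (M i j)) / Real.log 2 := by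
    rw [Hmat, Finset.sum_div]
    apply Finset.sum_congr rfl
    intro i _
    rw [Finset.sum_div]
    exact Finset.sum_congr rfl fun j _ => hconv (M i j)
  rw [hH2, hHmat, ← hylog]
  exact (div_le_div_iff_of_pos_right hlog2).mpr hschur
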